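/- Let n ≥ 2, let a ∈ ℝ, and let C be the companion matrix of X^n − a. Then for every ρ > 0 and all θ_1, …, θ_{n−1} ∈ ℝ, det(ρ • exp(∑_{j=1}^{n−1} θ_j • C^j)) = ρ^n, where exp denotes the matrix exponential. Consequently ρ is the unique positive real number whose n-th power equals this determinant, i.e. ρ = (det(ρ • exp(∑_{j=1}^{n−1} θ_j • C^j)))^{1/n}. (The modulus of an element z = ρ e^{kθ_1 + ⋯ + k^{n-1}θ_{n-1}} in generalized polar form over ℋ_n, 𝒞_n or Γ_n is |z| = F(z)^{1/n} = ρ.) -/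

import Mathlib

open NormedSpace

/-- The companion matrix of the monic real polynomial
`X^n + c_{n-1} X^{n-1} + ⋯ + c_1 X + c_0`: it has `1`s on the subdiagonal,
`-c i` in the last column, and `0` elsewhere. -/
def companionMatrix (n : ℕ) (c : Fin n → ℝ) : Matrix (Fin n) (Fin n) ℝ :=
  fun i j =>
    (if (i : ℕ) = (j : ℕ) + 1 then (1 : ℝ) else 0) +
      (if (j : ℕ) = n - 1 then -c i else 0)

lemma aux_abs_log_le {y : ℝ} (h : 1/2 ≤ y) : |Real.log y| ≤ 2 * |y - 1| := by
  have hy : (0:ℝ) < y := lt_of_lt_of_le (by norm_num) h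
  rcases le_total 1 y with h1 | h1
  · rw [abs_of_nonneg (Real.log_nonneg h1), abs_of_nonneg (by linarith)]
    have := Real.log_le_sub_one_of_pos hy
    linarith
  · rw [abs_of_nonpos (Real.log_nonpos hy.le h1), abs_of_nonpos (by linarith)]
    have h2 := Real.log_le_sub_one_of_pos (inv_pos.mpr hy)
    rw [Real.log_inv] at h2
    have h3 : y⁻¹ - 1 ≤ 2 * (1 - y) := by
      have hinv : y⁻¹ ≤ 2 := by
        rw [inv_le_comm₀ hy (by norm_num)]; linarith
      have h4 : y * y⁻¹ = 1 := mul_inv_cancel₀ hy.ne'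
      nlinarith
    linarith

lemma aux_abs_prod_one_add_sub_le {ι : Type*} (s : Finset ι) (f : ι → ℝ) (b : ℝ)
    (hb0 : 0 ≤ b) (hb1 : b ≤ 1) (hf : ∀ i, |f i| ≤ b) :
    |(∏ i ∈ s, (1 + f i)) - 1 - ∑ i ∈ s, f i| ≤ 3 ^ s.card * b ^ 2 := by
  induction s using Finset.cons_induction with
  | empty => simp; positivity
  | cons a s ha ih =>
    rw [Finset.prod_cons, Finset.sum_cons, Finset.card_cons]
    have hS : |∑ i ∈ s, f i| ≤ (s.card : ℝ) * b := by
      calc |∑ i ∈ s, f i| ≤ ∑ i ∈ s, |f i| := Finset.abs_sum_le_sum_abs _ _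
        _ ≤ ∑ _i ∈ s, b := Finset.sum_le_sum fun i _ => hf i
        _ = (s.card : ℝ) * b := by simp [mul_comm]
    have key : (1 + f a) * ∏ i ∈ s, (1 + f i) - 1 - (f a + ∑ i ∈ s, f i)
        = (1 + f a) * ((∏ i ∈ s, (1 + f i)) - 1 - ∑ i ∈ s, f i) + f a * ∑ i ∈ s, f i := by
      ring
    rw [key]
    have h1 : |1 + f a| ≤ 2 := by
      have := abs_le.mp (hf a); rw [abs_le]; constructor <;> linarith
    have hcard : (s.card : ℝ) ≤ 3 ^ s.card := by
      exact_mod_cast (Nat.lt_pow_self (n := s.card) (by norm_num : 1 < 3)).le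
    calc |(1 + f a) * ((∏ i ∈ s, (1 + f i)) - 1 - ∑ i ∈ s, f i) + f a * ∑ i ∈ s, f i|
        ≤ |1 + f a| * |(∏ i ∈ s, (1 + f i)) - 1 - ∑ i ∈ s, f i| + |f a| * |∑ i ∈ s, f i| := by
          refine (abs_add_le _ _).trans ?_
          rw [abs_mul, abs_mul]
      _ ≤ 2 * (3 ^ s.card * b ^ 2) + b * ((s.card : ℝ) * b) := by
          refine add_le_add (mul_le_mul h1 ih (abs_nonneg _) (by norm_num)) ?_
          exact mul_le_mul (hf a) hS (abs_nonneg _) hb0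
      _ ≤ 3 ^ (s.card + 1) * b ^ 2 := by
          have h3 : (0:ℝ) ≤ 3 ^ s.card := by positivity
          have hb2 : (0:ℝ) ≤ b ^ 2 := sq_nonneg b
          have : ((s.card : ℝ)) * b ^ 2 ≤ 3 ^ s.card * b ^ 2 := by
            exact mul_le_mul_of_nonneg_right hcard hb2
          have hs : (3:ℝ)^(s.card+1) * b^2 = 2*(3^s.card*b^2) + 3^s.card*b^2 := by ring
          have hbb : b * ((s.card:ℝ)*b) = (s.card:ℝ)*b^2 := by ring
          linarith


lemma aux_abs_det_one_add_sub_le {n : ℕ} (B : Matrix (Fin n) (Fin n) ℝ) (b : ℝ)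
    (hb0 : 0 ≤ b) (hb1 : b ≤ 1) (hB : ∀ i j, |B i j| ≤ b) :
    |(1 + B).det - 1 - Matrix.trace B| ≤ ((n.factorial : ℝ) * 2 ^ n + 3 ^ n) * b ^ 2 := by
  classical
  rw [Matrix.det_apply']
  rw [← Finset.add_sum_erase (Finset.univ) _ (Finset.mem_univ (1 : Equiv.Perm (Fin n)))]
  have hid : ((Equiv.Perm.sign (1 : Equiv.Perm (Fin n)) : ℤ) : ℝ)
        * ∏ i, (1 + B) ((1 : Equiv.Perm (Fin n)) i) i
      = ∏ i : Fin n, (1 + B i i) := by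
    simp [Matrix.add_apply, Matrix.one_apply]
  rw [hid]
  have htr : Matrix.trace B = ∑ i : Fin n, B i i := rfl
  have h1 : |(∏ i : Fin n, (1 + B i i)) - 1 - Matrix.trace B| ≤ 3 ^ n * b ^ 2 := by
    rw [htr]
    have := aux_abs_prod_one_add_sub_le Finset.univ (fun i => B i i) b hb0 hb1 (fun i => hB i i)
    simpa using this
  have hterm : ∀ σ ∈ Finset.univ.erase (1 : Equiv.Perm (Fin n)),
      |((Equiv.Perm.sign σ : ℤ) : ℝ) * ∏ i, (1 + B) (σ i) i| ≤ 2 ^ n * b ^ 2 := by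
    intro σ hσ
    have hσ1 : σ ≠ 1 := (Finset.mem_erase.mp hσ).1
    have hsign : |((Equiv.Perm.sign σ : ℤ) : ℝ)| = 1 := by
      rcases Int.units_eq_one_or (Equiv.Perm.sign σ) with h | h <;> rw [h] <;> norm_num
    rw [abs_mul, hsign, one_mul, Finset.abs_prod]
    rw [← Finset.prod_filter_mul_prod_filter_not Finset.univ (fun i => σ i = i)
      (fun i => |(1 + B) (σ i) i|)]
    have hfix : ∏ i ∈ Finset.univ.filter (fun i => σ i = i), |(1 + B) (σ i) i| ≤ 2 ^ n := by
      have step1 : ∏ i ∈ Finset.univ.filter (fun i => σ i = i), |(1 + B) (σ i) i|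
          ≤ ∏ _i ∈ Finset.univ.filter (fun i => σ i = i), (2:ℝ) := by
        refine Finset.prod_le_prod (fun i _ => abs_nonneg _) ?_
        intro i hi
        rw [Finset.mem_filter] at hi
        rw [hi.2]
        have := abs_le.mp (hB i i)
        simp only [Matrix.add_apply, Matrix.one_apply_eq]
        rw [abs_le]; constructor <;> linarith
      rw [Finset.prod_const] at step1
      refine step1.trans ?_
      refine pow_le_pow_right₀ (by norm_num) ?_
      have := Finset.card_filter_le (Finset.univ : Finset (Fin n)) (fun i => σ i = i)
      simpa using this
    have hmove : ∏ i ∈ Finset.univ.filter (fun i => ¬σ i = i), |(1 + B) (σ i) i| ≤ b ^ 2 := by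
      have hcard : 2 ≤ (Finset.univ.filter (fun i => ¬σ i = i)).card := by
        have h := Equiv.Perm.one_lt_card_support_of_ne_one hσ1
        have heq : σ.support = Finset.univ.filter (fun i => ¬σ i = i) := by
          ext x; simp [Equiv.Perm.mem_support]
        rw [heq] at h
        omega
      have step1 : ∏ i ∈ Finset.univ.filter (fun i => ¬σ i = i), |(1 + B) (σ i) i|
          ≤ ∏ _i ∈ Finset.univ.filter (fun i => ¬σ i = i), b := by
        refine Finset.prod_le_prod (fun i _ => abs_nonneg _) ?_
        intro i hi
        rw [Finset.mem_filter] at hi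
        have hne : σ i ≠ i := hi.2
        simp only [Matrix.add_apply, Matrix.one_apply_ne hne, zero_add]
        exact hB _ _
      rw [Finset.prod_const] at step1
      exact step1.trans (pow_le_pow_of_le_one hb0 hb1 hcard)
    exact mul_le_mul hfix hmove (Finset.prod_nonneg fun i _ => abs_nonneg _) (by positivity)
  have h2 : |∑ σ ∈ Finset.univ.erase (1 : Equiv.Perm (Fin n)),
      ((Equiv.Perm.sign σ : ℤ) : ℝ) * ∏ i, (1 + B) (σ i) i|
      ≤ (n.factorial : ℝ) * (2 ^ n * b ^ 2) := by
    refine (Finset.abs_sum_le_sum_abs _ _).trans ?_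
    refine (Finset.sum_le_sum hterm).trans ?_
    rw [Finset.sum_const, nsmul_eq_mul]
    refine mul_le_mul_of_nonneg_right ?_ (by positivity)
    have hle : (Finset.univ.erase (1 : Equiv.Perm (Fin n))).card
        ≤ Fintype.card (Equiv.Perm (Fin n)) :=
      (Finset.card_erase_le).trans (le_of_eq (Finset.card_univ))
    have hc : Fintype.card (Equiv.Perm (Fin n)) = n.factorial := by
      rw [Fintype.card_perm, Fintype.card_fin]
    exact_mod_cast hc ▸ hle
  have hsplit : (∏ i : Fin n, (1 + B i i)) + (∑ σ ∈ Finset.univ.erase (1 : Equiv.Perm (Fin n)),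
      ((Equiv.Perm.sign σ : ℤ) : ℝ) * ∏ i, (1 + B) (σ i) i) - 1 - Matrix.trace B
      = ((∏ i : Fin n, (1 + B i i)) - 1 - Matrix.trace B) +
        (∑ σ ∈ Finset.univ.erase (1 : Equiv.Perm (Fin n)),
          ((Equiv.Perm.sign σ : ℤ) : ℝ) * ∏ i, (1 + B) (σ i) i) := by ring
  rw [hsplit]
  refine (abs_add_le _ _).trans ?_
  have : ((n.factorial : ℝ) * 2 ^ n + 3 ^ n) * b ^ 2
      = 3 ^ n * b ^ 2 + (n.factorial : ℝ) * (2 ^ n * b ^ 2) := by ring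
  rw [this]
  exact add_le_add h1 h2

section ExpEst
variable {𝔸 : Type*} [NormedRing 𝔸] [NormedAlgebra ℝ 𝔸] [CompleteSpace 𝔸]

lemma aux_real_exp_tsum (r : ℝ) : Real.exp r = ∑' k : ℕ, r ^ k / (k.factorial : ℝ) := by
  rw [Real.exp_eq_exp_ℝ]
  exact congrFun (NormedSpace.exp_eq_tsum_div (𝔸 := ℝ)) r

lemma aux_norm_exp_sub_one_le (x : 𝔸) : ‖exp x - 1 - x‖ ≤ ‖x‖ ^ 2 * Real.exp ‖x‖ := by
  have hsum : Summable fun k : ℕ => ((k.factorial : ℝ))⁻¹ • x ^ k := expSeries_summable' x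
  have h0 : exp x = ∑' k : ℕ, ((k.factorial : ℝ))⁻¹ • x ^ k :=
    congrFun (NormedSpace.exp_eq_tsum (𝕂 := ℝ) (𝔸 := 𝔸)) x
  have hsum1 : Summable fun k : ℕ => (((k+1).factorial : ℝ))⁻¹ • x ^ (k+1) :=
    (summable_nat_add_iff (f := fun k : ℕ => ((k.factorial : ℝ))⁻¹ • x ^ k) 1).mpr hsum
  have h1 : exp x = 1 + x + ∑' k : ℕ, (((k+2).factorial : ℝ))⁻¹ • x ^ (k+2) := by
    rw [h0, Summable.tsum_eq_zero_add hsum]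
    rw [Summable.tsum_eq_zero_add hsum1]
    simp [add_assoc]
  have h2 : exp x - 1 - x = ∑' k : ℕ, (((k+2).factorial : ℝ))⁻¹ • x ^ (k+2) := by
    rw [h1]; abel
  rw [h2]
  have hbound : ∀ k : ℕ, ‖(((k+2).factorial : ℝ))⁻¹ • x ^ (k+2)‖
      ≤ ‖x‖ ^ 2 * (‖x‖ ^ k / (k.factorial : ℝ)) := by
    intro k
    rw [norm_smul]
    have hf : ((k.factorial : ℝ)) ≤ ((k+2).factorial : ℝ) := by
      exact_mod_cast Nat.factorial_le (by omega)
    have hfpos : (0:ℝ) < (k.factorial : ℝ) := by positivity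
    have h3 : ‖(((k+2).factorial : ℝ))⁻¹‖ ≤ ((k.factorial : ℝ))⁻¹ := by
      rw [Real.norm_eq_abs, abs_of_nonneg (by positivity)]
      exact inv_anti₀ hfpos hf
    have h4 : ‖x ^ (k+2)‖ ≤ ‖x‖ ^ (k+2) := norm_pow_le' x (by omega)
    calc ‖(((k+2).factorial : ℝ))⁻¹‖ * ‖x ^ (k+2)‖
        ≤ ((k.factorial : ℝ))⁻¹ * ‖x‖ ^ (k+2) :=
          mul_le_mul h3 h4 (norm_nonneg _) (by positivity)
      _ = ‖x‖ ^ 2 * (‖x‖ ^ k / (k.factorial : ℝ)) := by ring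
  have hsummg : Summable fun k : ℕ => ‖x‖ ^ 2 * (‖x‖ ^ k / (k.factorial : ℝ)) :=
    (Real.summable_pow_div_factorial ‖x‖).mul_left _
  have hsumnorm : Summable fun k : ℕ => ‖(((k+2).factorial : ℝ))⁻¹ • x ^ (k+2)‖ := by
    refine Summable.of_nonneg_of_le (fun k => norm_nonneg _) hbound hsummg
  calc ‖∑' k : ℕ, (((k+2).factorial : ℝ))⁻¹ • x ^ (k+2)‖
      ≤ ∑' k : ℕ, ‖(((k+2).factorial : ℝ))⁻¹ • x ^ (k+2)‖ := norm_tsum_le_tsum_norm hsumnorm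
    _ ≤ ∑' k : ℕ, ‖x‖ ^ 2 * (‖x‖ ^ k / (k.factorial : ℝ)) := Summable.tsum_le_tsum hbound hsumnorm hsummg
    _ = ‖x‖ ^ 2 * ∑' k : ℕ, (‖x‖ ^ k / (k.factorial : ℝ)) := tsum_mul_left
    _ = ‖x‖ ^ 2 * Real.exp ‖x‖ := by rw [aux_real_exp_tsum]

lemma aux_norm_exp_sub_one_le' (x : 𝔸) : ‖exp x - 1‖ ≤ ‖x‖ + ‖x‖ ^ 2 * Real.exp ‖x‖ := by
  have h := aux_norm_exp_sub_one_le x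
  calc ‖exp x - 1‖ = ‖(exp x - 1 - x) + x‖ := by rw [sub_add_cancel]
    _ ≤ ‖exp x - 1 - x‖ + ‖x‖ := norm_add_le _ _
    _ ≤ ‖x‖ ^ 2 * Real.exp ‖x‖ + ‖x‖ := add_le_add h le_rfl
    _ = ‖x‖ + ‖x‖ ^ 2 * Real.exp ‖x‖ := by ring

end ExpEst

lemma aux_entry_le_linfty {n : ℕ} (A : Matrix (Fin n) (Fin n) ℝ) (i j : Fin n) :
    letI := Matrix.linftyOpNormedAddCommGroup (m := Fin n) (n := Fin n) (α := ℝ)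
    |A i j| ≤ ‖A‖ := by
  letI := Matrix.linftyOpNormedAddCommGroup (m := Fin n) (n := Fin n) (α := ℝ)
  have h1 : ‖A i j‖₊ ≤ ∑ j' : Fin n, ‖A i j'‖₊ :=
    Finset.single_le_sum (f := fun j' => ‖A i j'‖₊) (fun j' _ => zero_le) (Finset.mem_univ j)
  have h2 : (∑ j' : Fin n, ‖A i j'‖₊) ≤ ‖A‖₊ := by
    rw [Matrix.linfty_opNNNorm_def]
    exact Finset.le_sup (f := fun i => ∑ j' : Fin n, ‖A i j'‖₊) (Finset.mem_univ i)
  have := h1.trans h2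
  have h3 : ‖A i j‖₊ ≤ ‖A‖₊ := this
  have := (NNReal.coe_le_coe.mpr h3 : (‖A i j‖₊ : ℝ) ≤ (‖A‖₊ : ℝ))
  simpa [Real.norm_eq_abs] using this

set_option maxHeartbeats 1600000 in
lemma aux_det_exp_eq_one_of_trace_eq_zero {n : ℕ} (M : Matrix (Fin n) (Fin n) ℝ)
    (hM : Matrix.trace M = 0) : (exp M).det = 1 := by
  classical
  letI : NormedAddCommGroup (Matrix (Fin n) (Fin n) ℝ) := Matrix.linftyOpNormedAddCommGroup
  letI : NormedRing (Matrix (Fin n) (Fin n) ℝ) := Matrix.linftyOpNormedRing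
  letI : NormedAlgebra ℝ (Matrix (Fin n) (Fin n) ℝ) := Matrix.linftyOpNormedAlgebra
  -- constants
  set K : ℝ := (n.factorial : ℝ) * 2 ^ n + 3 ^ n with hK
  set β₁ : ℝ := ‖M‖ + ‖M‖ ^ 2 * Real.exp ‖M‖ with hβ₁
  set β₂ : ℝ := (n : ℝ) * (‖M‖ ^ 2 * Real.exp ‖M‖) with hβ₂
  have hβ₁0 : 0 ≤ β₁ := by positivity
  have hβ₂0 : 0 ≤ β₂ := by positivity
  have hK0 : 0 ≤ K := by positivity
  set W : ℝ := β₂ + K * β₁ ^ 2 with hW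
  have hW0 : 0 ≤ W := by positivity
  set c : ℝ := min 1 (β₁ + 1)⁻¹ with hc
  have hc0 : 0 < c := lt_min one_pos (by positivity)
  have hc1 : c ≤ 1 := min_le_left _ _
  -- the quantitative estimate
  have Q : ∀ s : ℝ, 0 ≤ s → s ≤ c → |(exp (s • M)).det - 1| ≤ W * s ^ 2 := by
    intro s hs0 hsc
    have hs1 : s ≤ 1 := hsc.trans hc1
    have hnorm : ‖s • M‖ = s * ‖M‖ := by
      rw [norm_smul, Real.norm_eq_abs, abs_of_nonneg hs0]
    set B : Matrix (Fin n) (Fin n) ℝ := exp (s • M) - 1 with hB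
    have hone : (1 : Matrix (Fin n) (Fin n) ℝ) + B = exp (s • M) := by
      rw [hB]; abel
    have hexpmono : Real.exp (s * ‖M‖) ≤ Real.exp ‖M‖ := by
      apply Real.exp_le_exp.mpr
      nlinarith [norm_nonneg M]
    -- ‖B‖ ≤ s * β₁
    have hBnorm : ‖B‖ ≤ s * β₁ := by
      have := aux_norm_exp_sub_one_le' (s • M)
      rw [hnorm] at this
      refine this.trans ?_
      have h1 : (s * ‖M‖) ^ 2 * Real.exp (s * ‖M‖) ≤ s * (‖M‖ ^ 2 * Real.exp ‖M‖) := by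
        have hs2 : s ^ 2 ≤ s := by nlinarith
        have e0 : (0:ℝ) < Real.exp (s * ‖M‖) := Real.exp_pos _
        have : (s * ‖M‖) ^ 2 * Real.exp (s * ‖M‖) ≤ (s * ‖M‖) ^ 2 * Real.exp ‖M‖ := by
          nlinarith [sq_nonneg (s * ‖M‖)]
        refine this.trans ?_
        have : (s * ‖M‖) ^ 2 = s ^ 2 * ‖M‖ ^ 2 := by ring
        rw [this]
        nlinarith [Real.exp_pos ‖M‖, sq_nonneg ‖M‖, norm_nonneg M,
          mul_nonneg (mul_nonneg (sub_nonneg.mpr hs2) (sq_nonneg ‖M‖)) (Real.exp_pos ‖M‖).le]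
      rw [hβ₁]
      nlinarith
    -- trace bound
    have hTrB : |Matrix.trace B| ≤ β₂ * s ^ 2 := by
      have hR : B = (exp (s • M) - 1 - s • M) + s • M := by rw [hB]; abel
      have htr : Matrix.trace B = Matrix.trace (exp (s • M) - 1 - s • M) + s * Matrix.trace M := by
        rw [hR, Matrix.trace_add, Matrix.trace_smul, smul_eq_mul]
      rw [htr, hM, mul_zero, add_zero]
      set R : Matrix (Fin n) (Fin n) ℝ := exp (s • M) - 1 - s • M with hRdef
      have hRnorm : ‖R‖ ≤ s ^ 2 * (‖M‖ ^ 2 * Real.exp ‖M‖) := by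
        have := aux_norm_exp_sub_one_le (s • M)
        rw [hnorm] at this
        refine this.trans ?_
        have h1 : (s * ‖M‖) ^ 2 = s ^ 2 * ‖M‖ ^ 2 := by ring
        rw [h1]
        nlinarith [Real.exp_pos (s * ‖M‖), sq_nonneg s, sq_nonneg ‖M‖,
          mul_nonneg (sq_nonneg s) (sq_nonneg ‖M‖)]
      have htrabs : |Matrix.trace R| ≤ (n : ℝ) * ‖R‖ := by
        have : Matrix.trace R = ∑ i : Fin n, R i i := rfl
        rw [this]
        refine (Finset.abs_sum_le_sum_abs _ _).trans ?_
        have : ∀ i ∈ Finset.univ, |R i i| ≤ ‖R‖ := fun i _ => aux_entry_le_linfty R i i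
        refine (Finset.sum_le_sum this).trans ?_
        simp [mul_comm]
      refine htrabs.trans ?_
      rw [hβ₂]
      have hn0 : (0:ℝ) ≤ (n:ℝ) := Nat.cast_nonneg n
      nlinarith
    -- entrywise bound
    set b : ℝ := s * β₁ with hb
    have hb0 : 0 ≤ b := mul_nonneg hs0 hβ₁0
    have hb1 : b ≤ 1 := by
      have hs' : s ≤ (β₁ + 1)⁻¹ := hsc.trans (min_le_right _ _)
      have : s * (β₁ + 1) ≤ 1 := by
        rw [← le_div_iff₀ (by positivity)] at *
        calc s ≤ (β₁+1)⁻¹ := hs'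
          _ = 1 / (β₁+1) := by rw [one_div]
      nlinarith
    have hentry : ∀ i j, |B i j| ≤ b := fun i j =>
      (aux_entry_le_linfty B i j).trans hBnorm
    have hdet := aux_abs_det_one_add_sub_le B b hb0 hb1 hentry
    rw [hone] at hdet
    have : |(exp (s • M)).det - 1| ≤ |(exp (s • M)).det - 1 - Matrix.trace B| + |Matrix.trace B| := by
      have h := abs_add_le ((exp (s • M)).det - 1 - Matrix.trace B) (Matrix.trace B)
      have he : (exp (s • M)).det - 1 - Matrix.trace B + Matrix.trace B
          = (exp (s • M)).det - 1 := by ring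
      rw [he] at h
      exact h
    refine this.trans ?_
    have hKb : K * b ^ 2 = K * β₁ ^ 2 * s ^ 2 := by rw [hb]; ring
    rw [hW]
    calc |(exp (s • M)).det - 1 - Matrix.trace B| + |Matrix.trace B|
        ≤ K * b ^ 2 + β₂ * s ^ 2 := add_le_add hdet hTrB
      _ = (β₂ + K * β₁ ^ 2) * s ^ 2 := by rw [hKb]; ring
  -- for large k, `det (exp M) = det (exp ((1/k) • M)) ^ k` with the factor close to 1
  have key : ∀ k : ℕ, 0 < k → (1:ℝ)/(k:ℝ) ≤ c → W/((k:ℝ))^2 ≤ 1/2 →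
      0 < (exp M).det ∧ |Real.log ((exp M).det)| ≤ 2*W/(k:ℝ) := by
    intro k hk h1 h2
    have hkpos : (0:ℝ) < (k:ℝ) := by exact_mod_cast hk
    set s : ℝ := 1/(k:ℝ) with hs
    have hs0 : 0 ≤ s := by positivity
    have hδ := Q s hs0 h1
    set δ : ℝ := (exp (s • M)).det with hδdef
    have hs2 : s ^ 2 = 1/((k:ℝ))^2 := by rw [hs]; ring
    have hδ1 : |δ - 1| ≤ W/((k:ℝ))^2 := by
      have : W * s ^ 2 = W/((k:ℝ))^2 := by rw [hs2]; ring
      rw [← this]; exact hδ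
    have hδhalf : 1/2 ≤ δ := by
      have := abs_le.mp hδ1
      linarith
    have hδpos : 0 < δ := by linarith
    have hpow : (exp M).det = δ ^ k := by
      have hsm : k • (s • M) = M := by
        rw [← Nat.cast_smul_eq_nsmul ℝ k (s • M), smul_smul]
        have : (k:ℝ) * s = 1 := by
          rw [hs]; field_simp
        rw [this, one_smul]
      rw [← hsm, Matrix.exp_nsmul, Matrix.det_pow]
    have hdetpos : 0 < (exp M).det := by
      rw [hpow]; exact pow_pos hδpos k
    refine ⟨hdetpos, ?_⟩
    rw [hpow, Real.log_pow]
    rw [abs_mul, Nat.abs_cast]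
    have hlogδ : |Real.log δ| ≤ 2 * |δ - 1| := aux_abs_log_le hδhalf
    calc (k:ℝ) * |Real.log δ| ≤ (k:ℝ) * (2 * (W/((k:ℝ))^2)) := by
          refine mul_le_mul_of_nonneg_left ?_ hkpos.le
          exact hlogδ.trans (by linarith)
      _ = 2*W/(k:ℝ) := by field_simp
  -- eventually both conditions hold
  have hev : ∀ᶠ k : ℕ in Filter.atTop, 0 < k ∧ (1:ℝ)/(k:ℝ) ≤ c ∧ W/((k:ℝ))^2 ≤ 1/2 := by
    have ha : ∀ᶠ k : ℕ in Filter.atTop, (1/c : ℝ) ≤ (k:ℝ) :=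
      tendsto_natCast_atTop_atTop.eventually_ge_atTop (1/c)
    have hb : ∀ᶠ k : ℕ in Filter.atTop, (2*W : ℝ) ≤ (k:ℝ) :=
      tendsto_natCast_atTop_atTop.eventually_ge_atTop (2*W)
    have hcc : ∀ᶠ k : ℕ in Filter.atTop, 1 ≤ k := Filter.eventually_ge_atTop 1
    filter_upwards [ha, hb, hcc] with k hka hkb hkc
    have hkpos : (0:ℝ) < (k:ℝ) := by exact_mod_cast hkc
    refine ⟨hkc, ?_, ?_⟩
    · rw [div_le_iff₀ hkpos]
      have := mul_le_mul_of_nonneg_left hka hc0.le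
      calc (1:ℝ) = c * (1/c) := by field_simp
        _ ≤ c * (k:ℝ) := this
    · rw [div_le_iff₀ (by positivity)]
      have hk1 : (1:ℝ) ≤ (k:ℝ) := by exact_mod_cast hkc
      nlinarith
  have hdetpos : 0 < (exp M).det := by
    obtain ⟨k, hk⟩ := hev.exists
    exact (key k hk.1 hk.2.1 hk.2.2).1
  have hlogle : ∀ᶠ k : ℕ in Filter.atTop, |Real.log ((exp M).det)| ≤ 2*W/(k:ℝ) := by
    filter_upwards [hev] with k hk
    exact (key k hk.1 hk.2.1 hk.2.2).2
  have hten : Filter.Tendsto (fun k : ℕ => 2*W/(k:ℝ)) Filter.atTop (nhds 0) :=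
    tendsto_const_div_atTop_nhds_zero_nat (2*W)
  have hzero : |Real.log ((exp M).det)| ≤ 0 := ge_of_tendsto hten hlogle
  have hlog0 : Real.log ((exp M).det) = 0 := by
    have := abs_nonneg (Real.log ((exp M).det))
    have habs : |Real.log ((exp M).det)| = 0 := le_antisymm hzero this
    exact abs_eq_zero.mp habs
  have := Real.exp_log hdetpos
  rw [hlog0, Real.exp_zero] at this
  exact this.symm

lemma aux_companion_apply {n : ℕ} (a : ℝ) (k l : Fin n) :
    companionMatrix n (fun i => if (i : ℕ) = 0 then -a else 0) k l =
      (if (k : ℕ) = (l : ℕ) + 1 then (1:ℝ) else 0) +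
        (if (l : ℕ) = n - 1 then 1 else 0) * (if (k : ℕ) = 0 then a else 0) := by
  unfold companionMatrix
  congr 1
  split_ifs <;> simp_all

lemma aux_companion_pow_apply {n : ℕ} (hn : 2 ≤ n) (a : ℝ) (j : ℕ) (hj : j ≤ n) (i l : Fin n) :
    (companionMatrix n (fun i => if (i : ℕ) = 0 then -a else 0) ^ j) i l =
      if (i : ℕ) = (l : ℕ) + j then 1
      else if (i : ℕ) + n = (l : ℕ) + j then a else 0 := by
  induction j generalizing l with
  | zero =>
    rw [pow_zero]
    have hl : (l : ℕ) < n := l.isLt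
    have hi : (i : ℕ) < n := i.isLt
    rw [Matrix.one_apply]
    by_cases h : i = l
    · subst h; simp
    · have hne : (i : ℕ) ≠ (l : ℕ) := fun hc => h (Fin.ext hc)
      rw [if_neg h, if_neg (by omega), if_neg (by omega)]
  | succ j ih =>
    have hj' : j ≤ n := by omega
    rw [pow_succ, Matrix.mul_apply]
    have hrw : ∀ k : Fin n,
        (companionMatrix n (fun i => if (i : ℕ) = 0 then -a else 0) ^ j) i k *
          companionMatrix n (fun i => if (i : ℕ) = 0 then -a else 0) k l =
        (if (k : ℕ) = (l : ℕ) + 1 then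
            (companionMatrix n (fun i => if (i : ℕ) = 0 then -a else 0) ^ j) i k else 0) +
        (if (l : ℕ) = n - 1 then 1 else 0) *
          (if (k : ℕ) = 0 then
            (companionMatrix n (fun i => if (i : ℕ) = 0 then -a else 0) ^ j) i k * a else 0) := by
      intro k
      rw [aux_companion_apply]
      split_ifs <;> ring
    rw [Finset.sum_congr rfl (fun k _ => hrw k), Finset.sum_add_distrib, ← Finset.mul_sum]
    have hi : (i : ℕ) < n := i.isLt
    have hl : (l : ℕ) < n := l.isLt
    haveI : NeZero n := ⟨by omega⟩
    set P : Matrix (Fin n) (Fin n) ℝ := companionMatrix n (fun i => if (i : ℕ) = 0 then -a else 0) ^ j with hP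
    -- second sum : picks k = 0
    have hsum2 : (∑ k : Fin n, if (k : ℕ) = 0 then P i k * a else 0) = P i 0 * a := by
      have hcond : ∀ k : Fin n, ((k:ℕ) = 0) ↔ (k = (0 : Fin n)) := fun k => by
        rw [Fin.ext_iff]; simp
      rw [Finset.sum_congr rfl (fun k _ => by rw [if_congr (hcond k) rfl rfl])]
      rw [Finset.sum_ite_eq' Finset.univ (0 : Fin n) (fun k => P i k * a)]
      rw [if_pos (Finset.mem_univ _)]
    -- first sum : picks k with val = l + 1, if it exists
    have hsum1 : (∑ k : Fin n, if (k : ℕ) = (l:ℕ) + 1 then P i k else 0)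
        = (if h : (l:ℕ) + 1 < n then P i ⟨(l:ℕ)+1, h⟩ else 0) := by
      by_cases hcase : (l:ℕ) + 1 < n
      · rw [dif_pos hcase]
        have hcond : ∀ k : Fin n, ((k:ℕ) = (l:ℕ)+1) ↔ (k = ⟨(l:ℕ)+1, hcase⟩) := fun k => by
          rw [Fin.ext_iff]
        rw [Finset.sum_congr rfl (fun k _ => by rw [if_congr (hcond k) rfl rfl])]
        rw [Finset.sum_ite_eq' Finset.univ (⟨(l:ℕ)+1, hcase⟩ : Fin n) (fun k => P i k)]
        rw [if_pos (Finset.mem_univ _)]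
      · rw [dif_neg hcase]
        refine Finset.sum_eq_zero fun k _ => if_neg ?_
        have := k.isLt; omega
    rw [hsum1, hsum2]
    have hP0 : P i 0 = if (i:ℕ) = j then 1 else 0 := by
      rw [ih hj' 0]
      have h00 : ((0 : Fin n) : ℕ) = 0 := rfl
      rw [h00, zero_add]
      rw [if_neg (by omega : ¬ ((i:ℕ) + n = j))]
    rw [hP0]
    by_cases hcase : (l:ℕ) + 1 < n
    · rw [dif_pos hcase]
      have hln : ¬ ((l:ℕ) = n - 1) := by omega
      rw [if_neg hln, zero_mul, add_zero]
      rw [ih hj' ⟨(l:ℕ)+1, hcase⟩]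
      have hv : ((⟨(l:ℕ)+1, hcase⟩ : Fin n) : ℕ) = (l:ℕ)+1 := rfl
      rw [hv]
      split_ifs <;> first | rfl | omega
    · rw [dif_neg hcase]
      have hln : (l:ℕ) = n - 1 := by omega
      rw [if_pos hln, one_mul, zero_add]
      split_ifs <;> first | rfl | (exfalso; omega) | ring

lemma aux_companion_trace_pow {n : ℕ} (hn : 2 ≤ n) (a : ℝ) (j : ℕ) (hj1 : 1 ≤ j)
    (hj2 : j ≤ n - 1) :
    Matrix.trace (companionMatrix n (fun i => if (i : ℕ) = 0 then -a else 0) ^ j) = 0 := by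
  have : Matrix.trace (companionMatrix n (fun i => if (i : ℕ) = 0 then -a else 0) ^ j)
      = ∑ i : Fin n, (companionMatrix n (fun i => if (i : ℕ) = 0 then -a else 0) ^ j) i i := rfl
  rw [this]
  refine Finset.sum_eq_zero fun i _ => ?_
  rw [aux_companion_pow_apply hn a j (by omega) i i]
  have := i.isLt
  rw [if_neg (by omega), if_neg (by omega)]

/-- Let `C` be the companion matrix of `Xⁿ − a`.  For every `ρ > 0` and all
`θ₁, …, θ_{n−1} ∈ ℝ`, the Pythagorean function of the generalized polar form
`z = ρ e^{kθ₁ + ⋯ + k^{n-1}θ_{n-1}}` satisfies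
`F(z) = det (ρ • exp (∑_{j=1}^{n−1} θ_j • Cʲ)) = ρⁿ`; consequently `ρ` is the unique
positive real with `ρⁿ = F(z)`, i.e. `ρ = F(z)^{1/n}`. -/
theorem det_smul_exp_sum_smul_pow_companion (n : ℕ) (hn : 2 ≤ n) (a : ℝ)
    (ρ : ℝ) (hρ : 0 < ρ) (θ : ℕ → ℝ) :
    (ρ • exp (∑ j ∈ Finset.Icc 1 (n - 1),
        θ j • companionMatrix n (fun i => if (i : ℕ) = 0 then -a else 0) ^ j)).det = ρ ^ n ∧
    ρ = ((ρ • exp (∑ j ∈ Finset.Icc 1 (n - 1),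
        θ j • companionMatrix n (fun i => if (i : ℕ) = 0 then -a else 0) ^ j)).det)
          ^ ((1 : ℝ) / n) := by

  set M : Matrix (Fin n) (Fin n) ℝ := ∑ j ∈ Finset.Icc 1 (n - 1),
      θ j • companionMatrix n (fun i => if (i : ℕ) = 0 then -a else 0) ^ j with hMdef
  have htr : Matrix.trace M = 0 := by
    rw [hMdef, Matrix.trace_sum]
    refine Finset.sum_eq_zero fun j hj => ?_
    rw [Finset.mem_Icc] at hj
    rw [Matrix.trace_smul, aux_companion_trace_pow hn a j hj.1 hj.2, smul_zero]
  have hdet1 : (exp M).det = 1 := aux_det_exp_eq_one_of_trace_eq_zero M htr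
  have hdet : (ρ • exp M).det = ρ ^ n := by
    rw [Matrix.det_smul, hdet1, mul_one, Fintype.card_fin]
  refine ⟨hdet, ?_⟩
  rw [hdet]
  have hn0 : (n : ℝ) ≠ 0 := by positivity
  rw [show (ρ ^ n : ℝ) = ρ ^ (n : ℝ) from (Real.rpow_natCast ρ n).symm]
  rw [← Real.rpow_mul hρ.le, mul_one_div_cancel hn0, Real.rpow_one]
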